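/- Let F be a nonempty finite set (the feasible allocation set). Let Ĵ₋ᵢ : F → ℝ be the estimated social cost of all agents other than i, let cᵢ : F → ℝ be agent i's true cost, and let ĉᵢ, ĉᵢ' : F → ℝ be agent i's estimated cost under truthful and under arbitrary (possibly strategic) feedback, respectively. Define the VCG payment p(a) := (min over a'' ∈ F of Ĵ₋ᵢ(a'')) − Ĵ₋ᵢ(a) and the utility u(a) := p(a) − cᵢ(a). Suppose â minimizes a ↦ Ĵ₋ᵢ(a) + ĉᵢ(a) over F and â' minimizes a ↦ Ĵ₋ᵢ(a) + ĉᵢ'(a) over F. Then u(â') − u(â) ≤ |(cᵢ(â) − cᵢ(â')) − (ĉᵢ(â) − ĉᵢ(â'))|. In particular, if |(cᵢ(a) − cᵢ(a')) − (ĉᵢ(a) − ĉᵢ(a'))| ≤ ε for all a, a' ∈ F, then the utility gain from untruthful feedback is at most ε. -/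
import Mathlib

/-- One-shot VCG with learned costs: approximate truthfulness (deterministic core).
`Jmi` is the estimated social cost of the other agents, `ci` agent `i`'s true cost,
`chat`/`chat'` the estimates under truthful/arbitrary feedback, `p` the VCG payment,
`u` the utility. -/
theorem stmt0 {F : Type*} [Fintype F] [Nonempty F]
    (Jmi ci chat chat' : F → ℝ)
    (p u : F → ℝ)
    (hp : ∀ a, p a = (⨅ a'' : F, Jmi a'') - Jmi a)
    (hu : ∀ a, u a = p a - ci a)
    (ahat ahat' : F)
    (hahat : ∀ a, Jmi ahat + chat ahat ≤ Jmi a + chat a)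
    (hahat' : ∀ a, Jmi ahat' + chat' ahat' ≤ Jmi a + chat' a) :
    u ahat' - u ahat ≤ |(ci ahat - ci ahat') - (chat ahat - chat ahat')| ∧
      ∀ ε : ℝ, (∀ a a' : F, |(ci a - ci a') - (chat a - chat a')| ≤ ε) →
        u ahat' - u ahat ≤ ε := by
  have h := hahat ahat'
  have key : u ahat' - u ahat ≤ (ci ahat - ci ahat') - (chat ahat - chat ahat') := by
    rw [hu, hu, hp, hp]; linarith
  exact ⟨key.trans (le_abs_self _),
    fun ε hε => (key.trans (le_abs_self _)).trans (hε _ _)⟩
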